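/- Let (B, M) be a reduced local ring containing the rational numbers, with B/M uncountable, |B| = |B/M|, and at least two distinct minimal primes Q₁, Q₂. Then there exists a quasi-local subring S of B with maximal ideal S ∩ M such that: the map S → B/M² is surjective; IB ∩ S = I for every finitely generated ideal I of S; Q₁ ∩ S = Q₂ ∩ S; and for every ideal J of B with J ⊄ Q₁ and J ⊄ Q₂, the ideal of B generated by S ∩ J equals J. -/

import Mathlib

open Cardinal Polynomial

set_option linter.unusedSectionVars false

section Glue

variable {B : Type*} [CommRing B] [IsNoetherianRing B] [IsLocalRing B] [IsReduced B]
    [Algebra ℚ B]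
    [Uncountable (B ⧸ IsLocalRing.maximalIdeal B)]

local notation "M" => IsLocalRing.maximalIdeal B

variable (hBcard : #B = #(B ⧸ IsLocalRing.maximalIdeal B))

-- abbreviation for the key cardinal
local notation "lam" => #(B ⧸ IsLocalRing.maximalIdeal B)

lemma lam_uncountable : ℵ₀ < #(B ⧸ IsLocalRing.maximalIdeal B) := aleph0_lt_mk

include hBcard

-- cardinality of B/P for any prime P
omit [IsNoetherianRing B] [IsReduced B] [Algebra ℚ B] in
lemma mk_quot_prime (P : Ideal B) (hP : P.IsPrime) :
    #(B ⧸ P) = #(B ⧸ IsLocalRing.maximalIdeal B) := by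
  apply le_antisymm
  · calc #(B ⧸ P) ≤ #B := mk_le_of_surjective Ideal.Quotient.mk_surjective
    _ = _ := hBcard
  · have h : P ≤ M := IsLocalRing.le_maximalIdeal hP.ne_top
    refine mk_le_of_surjective (f := Ideal.Quotient.factor h) ?_
    intro y
    obtain ⟨b, rfl⟩ := Ideal.Quotient.mk_surjective y
    exact ⟨Ideal.Quotient.mk P b, Ideal.Quotient.factor_mk _ _⟩

-- image of an ideal not contained in P is large
lemma image_ideal_large (P : Ideal B) (hP : P.IsPrime) (W : Ideal B) (hW : ¬ W ≤ P) :
    #(B ⧸ IsLocalRing.maximalIdeal B) ≤ #((Ideal.Quotient.mk P) '' W) := by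
  obtain ⟨x, hxW, hxP⟩ := SetLike.not_le_iff_exists.mp hW
  haveI : IsDomain (B ⧸ P) := Ideal.Quotient.isDomain P
  rw [← mk_quot_prime hBcard P hP]
  set f : (B ⧸ P) → ((Ideal.Quotient.mk P) '' W) := fun y =>
    ⟨Ideal.Quotient.mk P x * y, by
      obtain ⟨b, rfl⟩ := Ideal.Quotient.mk_surjective y
      exact ⟨x * b, W.mul_mem_right b hxW, map_mul _ _ _⟩⟩
  have hf : Function.Injective f := by
    intro a b hab
    have hx0 : Ideal.Quotient.mk P x ≠ 0 := by
      simpa [Ideal.Quotient.eq_zero_iff_mem] using hxP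
    have : Ideal.Quotient.mk P x * a = Ideal.Quotient.mk P x * b := congrArg Subtype.val hab
    exact mul_left_cancel₀ hx0 this
  exact mk_le_of_injective hf

-- avoidance lemma
lemma avoid (P : Ideal B) (hP : P.IsPrime) (W : Ideal B) (hW : ¬ W ≤ P)
    (A : Set (B ⧸ P)) (hA : #A < #(B ⧸ IsLocalRing.maximalIdeal B)) (b : B) :
    ∃ w ∈ W, Ideal.Quotient.mk P (b + w) ∉ A := by
  by_contra h
  push_neg at h
  have hsub : (Ideal.Quotient.mk P) '' W ⊆ (fun z => Ideal.Quotient.mk P b + z) ⁻¹' A := by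
    rintro _ ⟨w, hw, rfl⟩
    have := h w hw
    simpa [map_add] using this
  have h1 : #((Ideal.Quotient.mk P) '' W) ≤ #A := by
    calc #((Ideal.Quotient.mk P) '' W) ≤ #((fun z => Ideal.Quotient.mk P b + z) ⁻¹' A) :=
      mk_le_mk_of_subset hsub
    _ ≤ #A := mk_preimage_of_injective _ _ (fun u v huv => by simpa using huv)
  exact absurd (le_trans (image_ideal_large hBcard P hP W hW) h1) (not_le.mpr hA)


variable (Q₁ Q₂ : Ideal B) (hQ₁ : Q₁ ∈ minimalPrimes B) (hQ₂ : Q₂ ∈ minimalPrimes B)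
  (hne : Q₁ ≠ Q₂)

omit hBcard

include hQ₁ hQ₂ hne

lemma Qprime₁ : Q₁.IsPrime := hQ₁.1.1
lemma Qprime₂ : Q₂.IsPrime := hQ₂.1.1

lemma not_le_QQ : ¬ Q₁ ≤ Q₂ := fun h => hne (le_antisymm h (hQ₂.2 ⟨hQ₁.1.1, bot_le⟩ h))
lemma not_le_QQ' : ¬ Q₂ ≤ Q₁ := fun h => hne (le_antisymm (hQ₁.2 ⟨hQ₂.1.1, bot_le⟩ h) h)

lemma M_not_le_Q₁ : ¬ (IsLocalRing.maximalIdeal B) ≤ Q₁ := fun h =>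
  not_le_QQ' _ _ hQ₁ hQ₂ hne (le_trans (IsLocalRing.le_maximalIdeal hQ₂.1.1.ne_top) h)
lemma M_not_le_Q₂ : ¬ (IsLocalRing.maximalIdeal B) ≤ Q₂ := fun h =>
  not_le_QQ _ _ hQ₁ hQ₂ hne (le_trans (IsLocalRing.le_maximalIdeal hQ₁.1.1.ne_top) h)

omit hQ₂ hne

/-- In a reduced ring, an element of a minimal prime has an annihilating element
outside that prime. -/
lemma ann_not_in (a : B) (ha : a ∈ Q₁) : ∃ s : B, s ∉ Q₁ ∧ s * a = 0 := by
  haveI hp : Q₁.IsPrime := hQ₁.1.1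
  set T : Submonoid B :=
    { carrier := {x | ∃ (s : B) (n : ℕ), s ∉ Q₁ ∧ x = s * a ^ n}
      mul_mem' := by
        rintro x y ⟨s, n, hs, rfl⟩ ⟨s', n', hs', rfl⟩
        exact ⟨s * s', n + n', fun h => ((hp.mem_or_mem h).elim hs hs'), by ring⟩
      one_mem' := ⟨1, 0, hp.ne_top ∘ (Ideal.eq_top_of_isUnit_mem Q₁ · isUnit_one), by simp⟩ }
  by_cases h0 : (0 : B) ∈ T
  · obtain ⟨s, n, hs, hsn⟩ := h0
    rcases n with _ | n
    · simp only [pow_zero, mul_one] at hsn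
      exact (hs (hsn ▸ Q₁.zero_mem)).elim
    · refine ⟨s, hs, ?_⟩
      have : (s * a) ^ (n + 1) = 0 := by
        have : (s * a) ^ (n + 1) = s ^ n * (s * a ^ (n + 1)) := by ring
        rw [this, ← hsn, mul_zero]
      exact IsNilpotent.eq_zero ⟨n + 1, this⟩
  · exfalso
    have hdisj : Disjoint ((⊥ : Ideal B) : Set B) (T : Set B) := by
      rw [Set.disjoint_left]
      rintro x hx hxT
      exact h0 (by simpa using (Ideal.mem_bot.mp hx) ▸ hxT)
    obtain ⟨p, hpp, -, hdis⟩ := Ideal.exists_le_prime_disjoint _ T hdisj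
    have hpQ : p ≤ Q₁ := by
      intro x hx
      by_contra hxQ
      exact Set.disjoint_left.mp hdis hx ⟨x, 0, hxQ, by simp⟩
    have : Q₁ ≤ p := hQ₁.2 ⟨hpp, bot_le⟩ hpQ
    exact Set.disjoint_left.mp hdis (this ha) ⟨1, 1, fun h => hp.ne_top (Ideal.eq_top_of_isUnit_mem Q₁ h isUnit_one), by simp⟩


omit hQ₁

/-- glued subring predicate -/
def glued (R : Subring B) : Prop := ∀ x ∈ R, (x ∈ Q₁ ↔ x ∈ Q₂)

/-- extension of a subring by one element -/
noncomputable def extend (R : Subring B) (t : B) : Subring B := (Polynomial.eval₂RingHom (R.subtype) t).range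

variable {Q₁ Q₂}

lemma le_extend (R : Subring B) (t : B) : R ≤ extend R t := by
  intro r hr
  exact ⟨Polynomial.C ⟨r, hr⟩, Polynomial.eval₂_C _ _⟩

lemma mem_extend_self (R : Subring B) (t : B) : t ∈ extend R t := ⟨Polynomial.X, Polynomial.eval₂_X _ _⟩

lemma mem_extend_iff {R : Subring B} {t y : B} :
    y ∈ extend R t ↔ ∃ p : Polynomial ↥R, Polynomial.eval₂ R.subtype t p = y := Iff.rfl

lemma card_extend (R : Subring B) (t : B) : #(extend R t) ≤ max ℵ₀ #R := by
  have hs : Function.Surjective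
      (fun p : Polynomial ↥R => (⟨Polynomial.eval₂ R.subtype t p, ⟨p, rfl⟩⟩ : ↥(extend R t))) := by
    rintro ⟨y, p, rfl⟩
    exact ⟨p, rfl⟩
  calc #(extend R t) ≤ #(Polynomial ↥R) := mk_le_of_surjective hs
  _ ≤ max #↥R ℵ₀ := Polynomial.cardinalMk_le_max
  _ = max ℵ₀ #↥R := max_comm _ _

lemma pow_mul_mem_iff (P : Ideal B) (hP : P.IsPrime) {a : B} (ha : a ∉ P) (d : ℕ) (y : B) :
    a ^ d * y ∈ P ↔ y ∈ P := by
  constructor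
  · intro h
    rcases hP.mem_or_mem h with h' | h'
    · exact absurd (hP.mem_of_pow_mem _ h') ha
    · exact h'
  · exact fun h => P.mul_mem_left _ h

/-- forced adjunction preserves gluedness -/
lemma glued_extend_forced {R : Subring B} (hg : glued Q₁ Q₂ R) (hp₁ : Q₁.IsPrime)
    (hp₂ : Q₂.IsPrime) {a t : B} (ha : a ∈ R) (ha1 : a ∉ Q₁) (ha2 : a ∉ Q₂)
    (hat : a * t ∈ R) : glued Q₁ Q₂ (extend R t) := by
  rintro y ⟨p, rfl⟩
  set d := p.natDegree with hd
  have hzmem : (∑ i ∈ Finset.range (d+1), ((p.coeff i : B) * (a^(d-i) * (a*t)^i))) ∈ R :=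
    Subring.sum_mem _ (fun i _ =>
      R.mul_mem (p.coeff i).2 (R.mul_mem (R.pow_mem ha _) (R.pow_mem hat _)))
  have hzeq : (∑ i ∈ Finset.range (d+1), ((p.coeff i : B) * (a^(d-i) * (a*t)^i)))
      = a ^ d * Polynomial.eval₂ R.subtype t p := by
    rw [Polynomial.eval₂_eq_sum_range, Finset.mul_sum]
    refine Finset.sum_congr rfl (fun i hi => ?_)
    have hi' : i ≤ d := Nat.lt_succ_iff.mp (Finset.mem_range.mp hi)
    have : a ^ (d - i) * a ^ i = a ^ d := by rw [← pow_add, Nat.sub_add_cancel hi']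
    calc (p.coeff i : B) * (a^(d-i) * (a*t)^i)
        = (a ^ (d-i) * a ^ i) * ((p.coeff i : B) * t ^ i) := by ring
      _ = a ^ d * (R.subtype (p.coeff i) * t ^ i) := by rw [this]; rfl
      _ = _ := by ring
  have key : a ^ d * Polynomial.eval₂ R.subtype t p ∈ Q₁
      ↔ a ^ d * Polynomial.eval₂ R.subtype t p ∈ Q₂ := by
    rw [← hzeq]; exact hg _ hzmem
  rw [← pow_mul_mem_iff Q₁ hp₁ ha1 d, ← pow_mul_mem_iff Q₂ hp₂ ha2 d]
  exact key


include hBcard hQ₁ hQ₂ hne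

/-- Key adjunction lemma: one can adjoin an element of the coset `b + W` preserving
gluedness. -/
lemma adjoin_glued (R : Subring B) (hg : glued Q₁ Q₂ R)
    (hc : #R < #(B ⧸ IsLocalRing.maximalIdeal B)) (b : B)
    (W : Ideal B) (hW1 : ¬ W ≤ Q₁) (hW2 : ¬ W ≤ Q₂) :
    ∃ t : B, t - b ∈ W ∧ glued Q₁ Q₂ (extend R t) := by
  have hp₁ : Q₁.IsPrime := hQ₁.1.1
  have hp₂ : Q₂.IsPrime := hQ₂.1.1
  haveI : IsDomain (B ⧸ Q₁) := Ideal.Quotient.isDomain (hI := hp₁)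
  haveI : IsDomain (B ⧸ Q₂) := Ideal.Quotient.isDomain (hI := hp₂)
  set φ₁ : ↥R →+* B ⧸ Q₁ := (Ideal.Quotient.mk Q₁).comp R.subtype with hφ₁
  set φ₂ : ↥R →+* B ⧸ Q₂ := (Ideal.Quotient.mk Q₂).comp R.subtype with hφ₂
  set A₁ : Set (B ⧸ Q₁) :=
    ⋃ p : {p : Polynomial ↥R // p.map φ₁ ≠ 0}, {z | Polynomial.IsRoot (p.1.map φ₁) z} with hA₁def
  set A₂ : Set (B ⧸ Q₂) :=
    ⋃ p : {p : Polynomial ↥R // p.map φ₂ ≠ 0}, {z | Polynomial.IsRoot (p.1.map φ₂) z} with hA₂def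
  have hcardA : ∀ {Q : Ideal B} (hQ : Q.IsPrime) (φ : ↥R →+* B ⧸ Q)
      (A : Set (B ⧸ Q)), (A = ⋃ p : {p : Polynomial ↥R // p.map φ ≠ 0},
        {z | Polynomial.IsRoot (p.1.map φ) z}) →
      Cardinal.mk A < #(B ⧸ IsLocalRing.maximalIdeal B) := by
    intro Q hQ φ A hA
    haveI : IsDomain (B ⧸ Q) := Ideal.Quotient.isDomain (hI := hQ)
    have h1 : #A ≤ #{p : Polynomial ↥R // p.map φ ≠ 0} *
        ⨆ p : {p : Polynomial ↥R // p.map φ ≠ 0}, #{z | Polynomial.IsRoot (p.1.map φ) z} := by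
      rw [hA]; exact mk_iUnion_le _
    have h2 : ∀ p : {p : Polynomial ↥R // p.map φ ≠ 0},
        #{z | Polynomial.IsRoot (p.1.map φ) z} ≤ ℵ₀ :=
      fun p => (Polynomial.finite_setOf_isRoot p.2).lt_aleph0.le
    have h3 : #{p : Polynomial ↥R // p.map φ ≠ 0} ≤ max ℵ₀ #↥R := by
      calc #{p : Polynomial ↥R // p.map φ ≠ 0} ≤ #(Polynomial ↥R) := mk_subtype_le _
      _ ≤ max #↥R ℵ₀ := Polynomial.cardinalMk_le_max
      _ = max ℵ₀ #↥R := max_comm _ _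
    have h4 : #A ≤ max ℵ₀ #↥R * ℵ₀ := by
      refine h1.trans (mul_le_mul' h3 ?_)
      exact ciSup_le' h2
    have h5 : max ℵ₀ #↥R * ℵ₀ = max ℵ₀ #↥R := by
      rw [mul_eq_max (le_max_left _ _) le_rfl]
      simp [max_assoc]
    rw [h5] at h4
    exact h4.trans_lt (max_lt lam_uncountable hc)
  obtain ⟨w₀, hw₀W, hw₀⟩ := avoid hBcard Q₁ hp₁ W hW1 A₁ (hcardA hp₁ φ₁ A₁ hA₁def) b
  have hW'2 : ¬ W * Q₁ ≤ Q₂ := by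
    rw [hp₂.mul_le]
    push_neg
    exact ⟨hW2, not_le_QQ _ _ hQ₁ hQ₂ hne⟩
  obtain ⟨w₁, hw₁W, hw₁⟩ := avoid hBcard Q₂ hp₂ (W * Q₁) hW'2 A₂
    (hcardA hp₂ φ₂ A₂ hA₂def) (b + w₀)
  refine ⟨b + w₀ + w₁, ?_, ?_⟩
  · have : b + w₀ + w₁ - b = w₀ + w₁ := by ring
    rw [this]
    exact W.add_mem hw₀W (Ideal.mul_le_left hw₁W)
  · set t := b + w₀ + w₁ with ht
    have hmkt : Ideal.Quotient.mk Q₁ t = Ideal.Quotient.mk Q₁ (b + w₀) := by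
      rw [Ideal.Quotient.mk_eq_mk_iff_sub_mem]
      have : t - (b + w₀) = w₁ := by rw [ht]; ring
      rw [this]
      exact Ideal.mul_le_right hw₁W
    have hcoeff : ∀ c : ↥R, (φ₁ c = 0 ↔ φ₂ c = 0) := by
      intro c
      simp only [hφ₁, hφ₂, RingHom.comp_apply, Ideal.Quotient.eq_zero_iff_mem]
      exact hg c c.2
    have hmap : ∀ p : Polynomial ↥R, (p.map φ₁ = 0 ↔ p.map φ₂ = 0) := by
      intro p
      simp only [Polynomial.ext_iff, Polynomial.coeff_map, Polynomial.coeff_zero]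
      exact ⟨fun h n => (hcoeff _).mp (h n), fun h n => (hcoeff _).mpr (h n)⟩
    rintro y ⟨p, rfl⟩
    have hev₁ : Ideal.Quotient.mk Q₁ (Polynomial.eval₂ R.subtype t p)
        = (p.map φ₁).eval (Ideal.Quotient.mk Q₁ t) := by
      rw [Polynomial.hom_eval₂, Polynomial.eval_map]
    have hev₂ : Ideal.Quotient.mk Q₂ (Polynomial.eval₂ R.subtype t p)
        = (p.map φ₂).eval (Ideal.Quotient.mk Q₂ t) := by
      rw [Polynomial.hom_eval₂, Polynomial.eval_map]
    by_cases hz : p.map φ₁ = 0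
    · have hz₂ : p.map φ₂ = 0 := (hmap p).mp hz
      have m₁ : Polynomial.eval₂ R.subtype t p ∈ Q₁ := by
        rw [← Ideal.Quotient.eq_zero_iff_mem, hev₁, hz, Polynomial.eval_zero]
      have m₂ : Polynomial.eval₂ R.subtype t p ∈ Q₂ := by
        rw [← Ideal.Quotient.eq_zero_iff_mem, hev₂, hz₂, Polynomial.eval_zero]
      exact iff_of_true m₁ m₂
    · have hz₂ : p.map φ₂ ≠ 0 := fun h => hz ((hmap p).mpr h)
      have m₁ : Polynomial.eval₂ R.subtype t p ∉ Q₁ := by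
        rw [← Ideal.Quotient.eq_zero_iff_mem, hev₁, hmkt]
        intro h
        exact hw₀ (Set.mem_iUnion.mpr ⟨⟨p, hz⟩, h⟩)
      have m₂ : Polynomial.eval₂ R.subtype t p ∉ Q₂ := by
        rw [← Ideal.Quotient.eq_zero_iff_mem, hev₂]
        intro h
        exact hw₁ (Set.mem_iUnion.mpr ⟨⟨p, hz₂⟩, h⟩)
      exact iff_of_false m₁ m₂


/-- spec for one extension step -/
def ExtOf (Q₁ Q₂ : Ideal B) (C R' : Subring B) : Prop :=
  C ≤ R' ∧ glued Q₁ Q₂ R' ∧ #R' ≤ max ℵ₀ #C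

omit hBcard hQ₁ hQ₂ hne

lemma extOf_rfl {C : Subring B} (hg : glued Q₁ Q₂ C) : ExtOf Q₁ Q₂ C C :=
  ⟨le_rfl, hg, le_max_right _ _⟩

lemma extOf_trans {C R' R'' : Subring B} (h1 : ExtOf Q₁ Q₂ C R') (h2 : ExtOf Q₁ Q₂ R' R'') :
    ExtOf Q₁ Q₂ C R'' := by
  refine ⟨h1.1.trans h2.1, h2.2.1, h2.2.2.trans ?_⟩
  calc max ℵ₀ #↥R' ≤ max ℵ₀ (max ℵ₀ #↥C) := max_le_max le_rfl h1.2.2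
  _ = max ℵ₀ #↥C := by rw [← max_assoc, max_self]

lemma extOf_card_lt {C R' : Subring B} (hc : #C < #(B ⧸ IsLocalRing.maximalIdeal B))
    (h : ExtOf Q₁ Q₂ C R') : #R' < #(B ⧸ IsLocalRing.maximalIdeal B) :=
  h.2.2.trans_lt (max_lt lam_uncountable hc)

include hBcard hQ₁ hQ₂ hne

lemma adjoin_extOf {C : Subring B} (hg : glued Q₁ Q₂ C)
    (hc : #C < #(B ⧸ IsLocalRing.maximalIdeal B)) (b : B)
    (W : Ideal B) (hW1 : ¬ W ≤ Q₁) (hW2 : ¬ W ≤ Q₂) :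
    ∃ R', ExtOf Q₁ Q₂ C R' ∧ ∃ t ∈ R', t - b ∈ W := by
  obtain ⟨t, htW, htg⟩ := adjoin_glued hBcard hQ₁ hQ₂ hne C hg hc b W hW1 hW2
  exact ⟨extend C t, ⟨le_extend C t, htg, card_extend C t⟩, t, mem_extend_self C t, htW⟩

lemma adjoin_many (n : ℕ) (C : Subring B) (hg : glued Q₁ Q₂ C)
    (hc : #C < #(B ⧸ IsLocalRing.maximalIdeal B)) (g : Fin n → B)
    (W : Ideal B) (hW1 : ¬ W ≤ Q₁) (hW2 : ¬ W ≤ Q₂) :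
    ∃ R', ExtOf Q₁ Q₂ C R' ∧ ∃ t : Fin n → B, (∀ i, t i ∈ R') ∧ ∀ i, t i - g i ∈ W := by
  induction n generalizing C with
  | zero => exact ⟨C, extOf_rfl hg, fun i => i.elim0, fun i => i.elim0, fun i => i.elim0⟩
  | succ n ih =>
    obtain ⟨R₁, hR₁, t, htR, htW⟩ := ih C hg hc (g ∘ Fin.succ)
    obtain ⟨R₂, hR₂, t₀, ht₀R, ht₀W⟩ := adjoin_extOf hBcard hQ₁ hQ₂ hne hR₁.2.1
      (extOf_card_lt hc hR₁) (g 0) W hW1 hW2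
    refine ⟨R₂, extOf_trans hR₁ hR₂, Fin.cases t₀ t, fun i => ?_, fun i => ?_⟩
    · induction i using Fin.cases with
      | zero => simpa using ht₀R
      | succ j => simpa using hR₂.1 (htR j)
    · induction i using Fin.cases with
      | zero => simpa using ht₀W
      | succ j => simpa using htW j

/-- main step for the contraction lemma: remove index 0 -/
lemma contraction_step (n : ℕ)
    (ih : ∀ (R : Subring B), glued Q₁ Q₂ R → #R < #(B ⧸ IsLocalRing.maximalIdeal B) →
      ∀ (a : Fin n → B), (∀ i, a i ∈ R) → ∀ c, c ∈ R → c ∈ Ideal.span (Set.range a) →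
      ∃ R', ExtOf Q₁ Q₂ R R' ∧ ∃ b : Fin n → B, (∀ i, b i ∈ R') ∧ ∑ i, b i * a i = c)
    (R : Subring B) (hg : glued Q₁ Q₂ R) (hc : #R < #(B ⧸ IsLocalRing.maximalIdeal B))
    (a : Fin (n+1) → B) (haR : ∀ i, a i ∈ R) (c : B) (hcR : c ∈ R)
    (hspan : c ∈ Ideal.span (Set.range a))
    (hW1 : ¬ (Ideal.span (Set.range (a ∘ Fin.succ))).colon (Ideal.span {a 0}) ≤ Q₁)
    (hW2 : ¬ (Ideal.span (Set.range (a ∘ Fin.succ))).colon (Ideal.span {a 0}) ≤ Q₂) :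
    ∃ R', ExtOf Q₁ Q₂ R R' ∧ ∃ b : Fin (n+1) → B, (∀ i, b i ∈ R') ∧ ∑ i, b i * a i = c := by
  obtain ⟨f, hf⟩ := Ideal.mem_span_range_iff_exists_fun.mp hspan
  obtain ⟨R₁, hR₁, t₀, ht₀R, ht₀W⟩ := adjoin_extOf hBcard hQ₁ hQ₂ hne hg hc (f 0) _ hW1 hW2
  set c₁ := c - t₀ * a 0 with hc₁
  have hc₁R : c₁ ∈ R₁ := R₁.sub_mem (hR₁.1 hcR) (R₁.mul_mem ht₀R (hR₁.1 (haR 0)))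
  have hc₁span : c₁ ∈ Ideal.span (Set.range (a ∘ Fin.succ)) := by
    have h1 : c₁ = (∑ i : Fin n, f i.succ * a i.succ) - (t₀ - f 0) * a 0 := by
      rw [hc₁, ← hf, Fin.sum_univ_succ]
      ring
    rw [h1]
    refine Ideal.sub_mem _ (Ideal.sum_mem _ (fun i _ => ?_)) ?_
    · exact Ideal.mul_mem_left _ _ (Ideal.subset_span ⟨i, rfl⟩)
    · exact Ideal.mem_colon_span_singleton.mp ht₀W
  obtain ⟨R', hR', b', hb'R, hb'sum⟩ := ih R₁ hR₁.2.1 (extOf_card_lt hc hR₁)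
    (a ∘ Fin.succ) (fun i => hR₁.1 (haR _)) c₁ hc₁R hc₁span
  refine ⟨R', extOf_trans hR₁ hR', Fin.cases t₀ b', fun i => ?_, ?_⟩
  · induction i using Fin.cases with
    | zero => simpa using hR'.1 ht₀R
    | succ j => simpa using hb'R j
  · rw [Fin.sum_univ_succ]
    simp only [Fin.cases_zero, Fin.cases_succ]
    have : ∑ i : Fin n, b' i * a i.succ = c₁ := hb'sum
    rw [this, hc₁]
    ring

/-- The contraction lemma: coefficients witnessing membership in an extended ideal can be
found in a glued extension. -/
lemma contraction (n : ℕ) (R : Subring B) (hg : glued Q₁ Q₂ R)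
    (hc : #R < #(B ⧸ IsLocalRing.maximalIdeal B))
    (a : Fin n → B) (haR : ∀ i, a i ∈ R) (c : B) (hcR : c ∈ R)
    (hspan : c ∈ Ideal.span (Set.range a)) :
    ∃ R', ExtOf Q₁ Q₂ R R' ∧ ∃ b : Fin n → B, (∀ i, b i ∈ R') ∧ ∑ i, b i * a i = c := by
  induction n generalizing R c with
  | zero =>
    refine ⟨R, extOf_rfl hg, fun i => i.elim0, fun i => i.elim0, ?_⟩
    have : Set.range a = ∅ := Set.range_eq_empty a
    rw [this, Ideal.span_empty, Ideal.mem_bot] at hspan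
    simp [hspan]
  | succ n ih =>
    have hp₁ : Q₁.IsPrime := hQ₁.1.1
    have hp₂ : Q₂.IsPrime := hQ₂.1.1
    by_cases hall : ∀ i, a i ∈ Q₁
    · -- all generators in both primes : use annihilators
      obtain ⟨s₁, hs₁, hs₁0⟩ := ann_not_in Q₁ hQ₁ (a 0) (hall 0)
      obtain ⟨s₂, hs₂, hs₂0⟩ := ann_not_in Q₂ hQ₂ (a 0) ((hg _ (haR 0)).mp (hall 0))
      refine contraction_step hBcard hQ₁ hQ₂ hne n ih R hg hc a haR c hcR hspan ?_ ?_
      · intro hle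
        refine hs₁ (hle (Ideal.mem_colon_span_singleton.mpr ?_))
        rw [hs₁0]; exact Ideal.zero_mem _
      · intro hle
        refine hs₂ (hle (Ideal.mem_colon_span_singleton.mpr ?_))
        rw [hs₂0]; exact Ideal.zero_mem _
    · push_neg at hall
      obtain ⟨i₀, hi₀⟩ := hall
      have hi₀2 : a i₀ ∉ Q₂ := fun h => hi₀ ((hg _ (haR i₀)).mpr h)
      by_cases hi0 : i₀ = 0
      · by_cases hn : n = 0
        · -- forced case
          subst hn
          obtain ⟨f, hf⟩ := Ideal.mem_span_range_iff_exists_fun.mp hspan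
          have hf1 : f 0 * a 0 = c := by
            rw [← hf, Fin.sum_univ_succ]
            simp
          have hfa : a 0 * f 0 ∈ R := by
            rw [mul_comm, hf1]; exact hcR
          have hglue : glued Q₁ Q₂ (extend R (f 0)) :=
            glued_extend_forced hg hp₁ hp₂ (haR 0) (hi0 ▸ hi₀) (hi0 ▸ hi₀2) hfa
          refine ⟨extend R (f 0), ⟨le_extend _ _, hglue, card_extend _ _⟩,
            fun _ => f 0, fun i => mem_extend_self _ _, ?_⟩
          rw [Fin.sum_univ_succ]
          simpa using hf1
        · -- permute indices 0 and 1
          obtain ⟨m, rfl⟩ := Nat.exists_eq_succ_of_ne_zero hn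
          set σ : Equiv.Perm (Fin (m+1+1)) := Equiv.swap 0 1 with hσ
          set a' : Fin (m+1+1) → B := a ∘ σ with ha'
          have ha'1 : a' 1 = a 0 := by simp [ha', hσ, Equiv.swap_apply_right]
          have ha'0mem : a 0 ∈ Set.range (a' ∘ Fin.succ) := by
            refine ⟨0, ?_⟩
            simp only [Function.comp_apply, Fin.succ_zero_eq_one, ha'1]
          have hWmem : a 0 ∈ (Ideal.span (Set.range (a' ∘ Fin.succ))).colon
              (Ideal.span {a' 0}) := by
            refine Ideal.mem_colon_span_singleton.mpr ?_
            exact Ideal.mul_mem_right _ _ (Ideal.subset_span ha'0mem)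
          have ha0Q1 : a 0 ∉ Q₁ := hi0 ▸ hi₀
          have ha0Q2 : a 0 ∉ Q₂ := hi0 ▸ hi₀2
          obtain ⟨R', hR', b'', hb''R, hb''sum⟩ :=
            contraction_step hBcard hQ₁ hQ₂ hne (m+1) ih R hg hc a'
              (fun i => haR _) c hcR
              (by rwa [ha', σ.surjective.range_comp a])
              (fun hle => ha0Q1 (hle hWmem)) (fun hle => ha0Q2 (hle hWmem))
          refine ⟨R', hR', b'' ∘ σ.symm, fun i => hb''R _, ?_⟩
          have := Equiv.sum_comp σ (fun i => (b'' ∘ σ.symm) i * a i)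
          rw [← this]
          simp only [Function.comp_apply, Equiv.symm_apply_apply]
          exact hb''sum
      · -- i₀ ≠ 0 : it appears among the later generators
        obtain ⟨k, hk⟩ := Fin.eq_succ_of_ne_zero hi0
        have hmem : a i₀ ∈ Set.range (a ∘ Fin.succ) := ⟨k, by rw [Function.comp_apply, ← hk]⟩
        have hWmem : a i₀ ∈ (Ideal.span (Set.range (a ∘ Fin.succ))).colon
            (Ideal.span {a 0}) := by
          refine Ideal.mem_colon_span_singleton.mpr ?_
          exact Ideal.mul_mem_right _ _ (Ideal.subset_span hmem)
        exact contraction_step hBcard hQ₁ hQ₂ hne n ih R hg hc a haR c hcR hspan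
          (fun hle => hi₀ (hle hWmem)) (fun hle => hi₀2 (hle hWmem))


/-- Task: adjoin generators of an ideal not contained in either prime. -/
lemma gen_ideal_ext (R : Subring B) (hg : glued Q₁ Q₂ R)
    (hc : #R < #(B ⧸ IsLocalRing.maximalIdeal B)) (n : ℕ) (g : Fin n → B)
    (hJ1 : ¬ Ideal.span (Set.range g) ≤ Q₁) (hJ2 : ¬ Ideal.span (Set.range g) ≤ Q₂) :
    ∃ R', ExtOf Q₁ Q₂ R R' ∧
      Ideal.span ((R' : Set B) ∩ (Ideal.span (Set.range g) : Set B))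
        = Ideal.span (Set.range g) := by
  have hp₁ : Q₁.IsPrime := hQ₁.1.1
  have hp₂ : Q₂.IsPrime := hQ₂.1.1
  set J := Ideal.span (Set.range g) with hJ
  set W := (IsLocalRing.maximalIdeal B) * J with hW
  have hW1 : ¬ W ≤ Q₁ := by
    rw [hW, hp₁.mul_le]
    push_neg
    exact ⟨M_not_le_Q₁ _ _ hQ₁ hQ₂ hne, hJ1⟩
  have hW2 : ¬ W ≤ Q₂ := by
    rw [hW, hp₂.mul_le]
    push_neg
    exact ⟨M_not_le_Q₂ _ _ hQ₁ hQ₂ hne, hJ2⟩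
  obtain ⟨R', hR', t, htR, htW⟩ := adjoin_many hBcard hQ₁ hQ₂ hne n R hg hc g W hW1 hW2
  have hWJ : W ≤ J := Ideal.mul_le_right
  have htJ : ∀ i, t i ∈ J := by
    intro i
    have : t i = g i + (t i - g i) := by ring
    rw [this]
    exact J.add_mem (Ideal.subset_span ⟨i, rfl⟩) (hWJ (htW i))
  have hKJ : Ideal.span (Set.range t) ≤ J := by
    rw [Ideal.span_le]
    rintro _ ⟨i, rfl⟩
    exact htJ i
  have hNak : J ≤ Ideal.span (Set.range t) := by
    refine Submodule.le_of_le_smul_of_le_jacobson_bot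
      (Submodule.fg_span (Set.finite_range g)) (IsLocalRing.maximalIdeal_le_jacobson ⊥) ?_
    rw [Ideal.smul_eq_mul, ← hW]
    rw [hJ, Ideal.span_le]
    rintro _ ⟨i, rfl⟩
    have : g i = t i - (t i - g i) := by ring
    rw [this]
    exact Submodule.sub_mem _ (Submodule.mem_sup_left (Ideal.subset_span ⟨i, rfl⟩))
      (Submodule.mem_sup_right (htW i))
  refine ⟨R', hR', le_antisymm ?_ ?_⟩
  · rw [Ideal.span_le]
    exact fun x hx => hx.2
  · refine le_trans hNak ?_
    rw [Ideal.span_le]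
    rintro _ ⟨i, rfl⟩
    exact Ideal.subset_span ⟨htR i, htJ i⟩

omit hBcard in
/-- Task: adjoin the inverse of a unit. -/
lemma inv_ext (R : Subring B) (hg : glued Q₁ Q₂ R) (u : B) (hu : u ∈ R)
    (hunit : u ∉ IsLocalRing.maximalIdeal B) :
    ∃ R', ExtOf Q₁ Q₂ R R' ∧ ∃ v ∈ R', u * v = 1 := by
  have hp₁ : Q₁.IsPrime := hQ₁.1.1
  have hp₂ : Q₂.IsPrime := hQ₂.1.1
  have hIs : IsUnit u := by
    by_contra h
    exact hunit (IsLocalRing.mem_maximalIdeal u |>.mpr h)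
  obtain ⟨w, hw⟩ := isUnit_iff_exists_inv.mp hIs
  have hu1 : u ∉ Q₁ := fun h => hp₁.ne_top (Ideal.eq_top_of_isUnit_mem _ h hIs)
  have hu2 : u ∉ Q₂ := fun h => hp₂.ne_top (Ideal.eq_top_of_isUnit_mem _ h hIs)
  have hglue : glued Q₁ Q₂ (extend R w) :=
    glued_extend_forced hg hp₁ hp₂ hu hu1 hu2 (by rw [hw]; exact R.one_mem)
  exact ⟨extend R w, ⟨le_extend _ _, hglue, card_extend _ _⟩, w, mem_extend_self _ _, hw⟩

/-- Task: hit a coset of `M²`. -/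
lemma coset_ext (R : Subring B) (hg : glued Q₁ Q₂ R)
    (hc : #R < #(B ⧸ IsLocalRing.maximalIdeal B)) (b : B) :
    ∃ R', ExtOf Q₁ Q₂ R R' ∧ ∃ s ∈ R', s - b ∈ (IsLocalRing.maximalIdeal B)^2 := by
  have hp₁ : Q₁.IsPrime := hQ₁.1.1
  have hp₂ : Q₂.IsPrime := hQ₂.1.1
  have hsq : (IsLocalRing.maximalIdeal B)^2
      = (IsLocalRing.maximalIdeal B) * (IsLocalRing.maximalIdeal B) := sq _
  have hW1 : ¬ (IsLocalRing.maximalIdeal B)^2 ≤ Q₁ := by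
    rw [hsq, hp₁.mul_le]
    push_neg
    exact ⟨M_not_le_Q₁ _ _ hQ₁ hQ₂ hne, M_not_le_Q₁ _ _ hQ₁ hQ₂ hne⟩
  have hW2 : ¬ (IsLocalRing.maximalIdeal B)^2 ≤ Q₂ := by
    rw [hsq, hp₂.mul_le]
    push_neg
    exact ⟨M_not_le_Q₂ _ _ hQ₁ hQ₂ hne, M_not_le_Q₂ _ _ hQ₁ hQ₂ hne⟩
  exact adjoin_extOf hBcard hQ₁ hQ₂ hne hg hc b _ hW1 hW2


omit hBcard hQ₁ hQ₂ hne

/-- cardinality of the minimal subring -/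
lemma card_bot_le : #(⊥ : Subring B) ≤ ℵ₀ := by
  have hs : Function.Surjective (fun n : ℤ => (⟨(n : B), by simp [Subring.mem_bot]⟩ :
      ↥(⊥ : Subring B))) := by
    rintro ⟨x, hx⟩
    obtain ⟨n, rfl⟩ := Subring.mem_bot.mp hx
    exact ⟨n, rfl⟩
  haveI : Countable ↥(⊥ : Subring B) := hs.countable
  exact mk_le_aleph0

include hQ₁ hQ₂

/-- the minimal subring is glued (uses `ℚ ⊆ B`) -/
lemma glued_bot : glued Q₁ Q₂ (⊥ : Subring B) := by
  intro x hx
  obtain ⟨n, rfl⟩ := Subring.mem_bot.mp hx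
  by_cases hn : n = 0
  · subst hn
    simp only [Int.cast_zero]
    exact iff_of_true (Ideal.zero_mem _) (Ideal.zero_mem _)
  · have hu : IsUnit ((n : ℤ) : B) := by
      have : ((n : ℤ) : B) = algebraMap ℚ B ((n : ℤ) : ℚ) := by
        rw [map_intCast]
      rw [this]
      exact (IsUnit.map (algebraMap ℚ B) (isUnit_iff_ne_zero.mpr (by exact_mod_cast hn)))
    exact iff_of_false (fun h => hQ₁.1.1.ne_top (Ideal.eq_top_of_isUnit_mem _ h hu))
      (fun h => hQ₂.1.1.ne_top (Ideal.eq_top_of_isUnit_mem _ h hu))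

end Glue

universe uB

/-- The type of tasks for the transfinite construction. -/
def GTask (B : Type uB) : Type uB :=
  B ⊕ ((Σ n : ULift.{uB} ℕ, (Fin n.down → B)) ⊕
    (B ⊕ (B × Σ n : ULift.{uB} ℕ, (Fin n.down → B))))

section Glue2

open Cardinal

universe u

variable {B : Type u} [CommRing B] [IsNoetherianRing B] [IsLocalRing B] [IsReduced B]
    [Algebra ℚ B]
    [Uncountable (B ⧸ IsLocalRing.maximalIdeal B)]
    (hBcard : #B = #(B ⧸ IsLocalRing.maximalIdeal B))
    {Q₁ Q₂ : Ideal B} (hQ₁ : Q₁ ∈ minimalPrimes B) (hQ₂ : Q₂ ∈ minimalPrimes B)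
    (hne : Q₁ ≠ Q₂)

/-- what performing a task means -/
def taskSpec (Q₁ Q₂ : Ideal B) (τ : GTask B) (C R' : Subring B) : Prop :=
  match τ with
  | Sum.inl b => ∃ s ∈ R', s - b ∈ (IsLocalRing.maximalIdeal B)^2
  | Sum.inr (Sum.inl ⟨_, g⟩) =>
      ¬ Ideal.span (Set.range g) ≤ Q₁ → ¬ Ideal.span (Set.range g) ≤ Q₂ →
        Ideal.span ((R' : Set B) ∩ (Ideal.span (Set.range g) : Set B)) = Ideal.span (Set.range g)
  | Sum.inr (Sum.inr (Sum.inl u)) =>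
      u ∈ C → u ∉ IsLocalRing.maximalIdeal B → ∃ v ∈ R', u * v = 1
  | Sum.inr (Sum.inr (Sum.inr (c, ⟨n, a⟩))) =>
      c ∈ C → (∀ i, a i ∈ C) → c ∈ Ideal.span (Set.range a) →
        ∃ b : Fin n.down → B, (∀ i, b i ∈ R') ∧ ∑ i, b i * a i = c

include hBcard hQ₁ hQ₂ hne in
/-- every task can be performed on a small glued subring -/
lemma master (τ : GTask B) (C : Subring B) (hg : glued Q₁ Q₂ C)
    (hc : #C < #(B ⧸ IsLocalRing.maximalIdeal B)) :
    ∃ R', ExtOf Q₁ Q₂ C R' ∧ taskSpec Q₁ Q₂ τ C R' := by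
  match τ with
  | Sum.inl b =>
    obtain ⟨R', hR', s, hsR, hs⟩ := coset_ext hBcard hQ₁ hQ₂ hne C hg hc b
    exact ⟨R', hR', show ∃ s ∈ R', _ from ⟨s, hsR, hs⟩⟩
  | Sum.inr (Sum.inl ⟨n, g⟩) =>
    by_cases h1 : ¬ Ideal.span (Set.range g) ≤ Q₁
    · by_cases h2 : ¬ Ideal.span (Set.range g) ≤ Q₂
      · obtain ⟨R', hR', hgen⟩ := gen_ideal_ext hBcard hQ₁ hQ₂ hne C hg hc n.down g h1 h2
        exact ⟨R', hR', show _ → _ → _ from fun _ _ => hgen⟩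
      · exact ⟨C, extOf_rfl hg, show _ → _ → _ from fun _ h => absurd h h2⟩
    · exact ⟨C, extOf_rfl hg, show _ → _ → _ from fun h _ => absurd h h1⟩
  | Sum.inr (Sum.inr (Sum.inl u)) =>
    by_cases hu : u ∈ C ∧ u ∉ IsLocalRing.maximalIdeal B
    · obtain ⟨R', hR', v, hvR, hv⟩ := inv_ext hQ₁ hQ₂ hne C hg u hu.1 hu.2
      exact ⟨R', hR', show _ → _ → ∃ v ∈ R', u * v = 1 from fun _ _ => ⟨v, hvR, hv⟩⟩
    · exact ⟨C, extOf_rfl hg,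
        show u ∈ C → u ∉ IsLocalRing.maximalIdeal B → ∃ v ∈ C, u * v = 1 from
          fun h1 h2 => absurd ⟨h1, h2⟩ hu⟩
  | Sum.inr (Sum.inr (Sum.inr (c, ⟨n, a⟩))) =>
    by_cases hu : c ∈ C ∧ (∀ i, a i ∈ C) ∧ c ∈ Ideal.span (Set.range a)
    · obtain ⟨R', hR', b, hbR, hb⟩ := contraction hBcard hQ₁ hQ₂ hne n.down C hg hc a
        hu.2.1 c hu.1 hu.2.2
      exact ⟨R', hR', show _ → _ → _ → ∃ b : Fin n.down → B, (∀ i, b i ∈ R') ∧ _ from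
        fun _ _ _ => ⟨b, hbR, hb⟩⟩
    · exact ⟨C, extOf_rfl hg,
        show c ∈ C → (∀ i, a i ∈ C) → c ∈ Ideal.span (Set.range a) →
            ∃ b : Fin n.down → B, (∀ i, b i ∈ C) ∧ ∑ i, b i * a i = c from
          fun h1 h2 h3 => absurd ⟨h1, h2, h3⟩ hu⟩


omit hBcard hQ₁ hQ₂ hne

lemma card_fin_arrow (h : ℵ₀ ≤ #B) : ∀ n : ℕ, #(Fin n → B) ≤ #B := by
  intro n
  induction n with
  | zero =>
    haveI : Subsingleton (Fin 0 → B) := ⟨fun f g => funext fun i => i.elim0⟩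
    calc #(Fin 0 → B) ≤ 1 := le_one_iff_subsingleton.mpr this
    _ ≤ ℵ₀ := one_le_aleph0
    _ ≤ #B := h
  | succ n ih =>
    calc #(Fin (n+1) → B) = #(B × (Fin n → B)) := mk_congr (Fin.consEquiv fun _ => B).symm
    _ = #B * #(Fin n → B) := by rw [mk_prod, lift_id, lift_id]
    _ ≤ #B * #B := mul_le_mul' le_rfl ih
    _ = #B := mul_eq_self h

lemma card_GTask_le (h : ℵ₀ ≤ #B) : #(GTask B) ≤ #B := by
  have hsum : ∀ (X Y : Type u), #X ≤ #B → #Y ≤ #B → #(X ⊕ Y) ≤ #B := by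
    intro X Y hX hY
    calc #(X ⊕ Y) = #X + #Y := by rw [mk_sum, lift_id, lift_id]
    _ ≤ #B := add_le_of_le h hX hY
  have hSig : #(Σ n : ULift.{u} ℕ, (Fin n.down → B)) ≤ #B := by
    rw [mk_sigma]
    calc Cardinal.sum (fun n : ULift ℕ => #(Fin n.down → B))
        ≤ Cardinal.sum (fun _ : ULift ℕ => #B) :=
          sum_le_sum _ _ (fun n => card_fin_arrow h n.down)
    _ = #(ULift ℕ) * #B := sum_const' _ _
    _ = ℵ₀ * #B := by rw [mk_uLift, mk_nat, lift_aleph0]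
    _ = #B := by rw [mul_eq_max le_rfl h, max_eq_right h]
  have hprod : #(B × (Σ n : ULift.{u} ℕ, (Fin n.down → B))) ≤ #B := by
    rw [mk_prod, lift_id, lift_id]
    calc #B * #(Σ n : ULift.{u} ℕ, (Fin n.down → B)) ≤ #B * #B := mul_le_mul' le_rfl hSig
    _ = #B := mul_eq_self h
  exact hsum _ _ le_rfl (hsum _ _ hSig (hsum _ _ le_rfl hprod))

lemma card_iota (h : ℵ₀ ≤ #B) : #(B × GTask B) = #B := by
  refine le_antisymm ?_ (mk_le_of_injective (f := fun b : B => (b, Sum.inl b)) ?_)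
  · rw [mk_prod, lift_id, lift_id]
    calc #B * #(GTask B) ≤ #B * #B := mul_le_mul' le_rfl (card_GTask_le h)
    _ = #B := mul_eq_self h
  · intro x y hxy
    exact (Prod.mk.injEq _ _ _ _ ▸ hxy).1


include hBcard hQ₁ hQ₂ hne

variable (r : B × GTask B → B × GTask B → Prop) [wo : IsWellOrder (B × GTask B) r]

/-- one step of the construction -/
noncomputable def stepR (C : Subring B) (τ : GTask B) : Subring B :=
  letI := Classical.dec (glued Q₁ Q₂ C ∧ #C < #(B ⧸ IsLocalRing.maximalIdeal B))
  if h : glued Q₁ Q₂ C ∧ #C < #(B ⧸ IsLocalRing.maximalIdeal B) then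
    (master hBcard hQ₁ hQ₂ hne τ C h.1 h.2).choose
  else C

lemma le_stepR (C : Subring B) (τ : GTask B) : C ≤ stepR hBcard hQ₁ hQ₂ hne C τ := by
  unfold stepR
  by_cases h : glued Q₁ Q₂ C ∧ #C < #(B ⧸ IsLocalRing.maximalIdeal B)
  · rw [dif_pos h]
    exact (master hBcard hQ₁ hQ₂ hne _ C h.1 h.2).choose_spec.1.1
  · rw [dif_neg h]

lemma stepR_card (C : Subring B) (τ : GTask B) :
    #(stepR hBcard hQ₁ hQ₂ hne C τ) ≤ max ℵ₀ #C := by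
  unfold stepR
  by_cases h : glued Q₁ Q₂ C ∧ #C < #(B ⧸ IsLocalRing.maximalIdeal B)
  · rw [dif_pos h]
    exact (master hBcard hQ₁ hQ₂ hne _ C h.1 h.2).choose_spec.1.2.2
  · rw [dif_neg h]
    exact le_max_right _ _

lemma stepR_spec (C : Subring B) (τ : GTask B)
    (h : glued Q₁ Q₂ C ∧ #C < #(B ⧸ IsLocalRing.maximalIdeal B)) :
    ExtOf Q₁ Q₂ C (stepR hBcard hQ₁ hQ₂ hne C τ) ∧
      taskSpec Q₁ Q₂ τ C (stepR hBcard hQ₁ hQ₂ hne C τ) := by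
  unfold stepR
  rw [dif_pos h]
  exact (master hBcard hQ₁ hQ₂ hne τ C h.1 h.2).choose_spec

/-- the transfinite chain of subrings -/
noncomputable def chainR : B × GTask B → Subring B :=
  (IsWellFounded.wf (r := r)).fix
    (fun x IH => stepR hBcard hQ₁ hQ₂ hne
      (⨆ i : Option {y // r y x}, Option.elim i ⊥ (fun y => IH y.1 y.2)) x.2)

/-- union of the earlier stages -/
noncomputable def prevR (x : B × GTask B) : Subring B :=
  ⨆ i : Option {y // r y x}, Option.elim i ⊥ (fun y => chainR hBcard hQ₁ hQ₂ hne r y.1)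

lemma chainR_eq (x : B × GTask B) :
    chainR hBcard hQ₁ hQ₂ hne r x
      = stepR hBcard hQ₁ hQ₂ hne (prevR hBcard hQ₁ hQ₂ hne r x) x.2 := by
  unfold chainR prevR
  rw [WellFounded.fix_eq]
  rfl

lemma prevR_le_chainR (x : B × GTask B) :
    prevR hBcard hQ₁ hQ₂ hne r x ≤ chainR hBcard hQ₁ hQ₂ hne r x := by
  rw [chainR_eq]
  exact le_stepR hBcard hQ₁ hQ₂ hne _ _

lemma chainR_le_prevR {x y : B × GTask B} (h : r y x) :
    chainR hBcard hQ₁ hQ₂ hne r y ≤ prevR hBcard hQ₁ hQ₂ hne r x :=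
  le_iSup (fun i : Option {y // r y x} =>
    Option.elim i ⊥ (fun y => chainR hBcard hQ₁ hQ₂ hne r y.1)) (some ⟨y, h⟩)

lemma bot_le_prevR (x : B × GTask B) : ⊥ ≤ prevR hBcard hQ₁ hQ₂ hne r x :=
  le_iSup (fun i : Option {y // r y x} =>
    Option.elim i ⊥ (fun y => chainR hBcard hQ₁ hQ₂ hne r y.1)) none

lemma chainR_mono {x y : B × GTask B} (h : r x y) :
    chainR hBcard hQ₁ hQ₂ hne r x ≤ chainR hBcard hQ₁ hQ₂ hne r y :=
  (chainR_le_prevR hBcard hQ₁ hQ₂ hne r h).trans (prevR_le_chainR hBcard hQ₁ hQ₂ hne r y)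

lemma prevR_directed (x : B × GTask B) :
    Directed (· ≤ ·) (fun i : Option {y // r y x} =>
      Option.elim i ⊥ (fun y => chainR hBcard hQ₁ hQ₂ hne r y.1)) := by
  intro i j
  match i, j with
  | none, j => exact ⟨j, bot_le, le_rfl⟩
  | i, none => exact ⟨i, le_rfl, bot_le⟩
  | some y, some z =>
    rcases trichotomous_of r y.1 z.1 with h | h | h
    · exact ⟨some z, chainR_mono hBcard hQ₁ hQ₂ hne r h, le_rfl⟩
    · refine ⟨some z, ?_, le_rfl⟩
      simp only [Option.elim]
      rw [show y.1 = z.1 from h]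
    · exact ⟨some y, le_rfl, chainR_mono hBcard hQ₁ hQ₂ hne r h⟩

lemma coe_prevR (x : B × GTask B) :
    ((prevR hBcard hQ₁ hQ₂ hne r x : Subring B) : Set B)
      = ⋃ i : Option {y // r y x},
          ((Option.elim i ⊥ (fun y => chainR hBcard hQ₁ hQ₂ hne r y.1) : Subring B) : Set B) :=
  Subring.coe_iSup_of_directed (prevR_directed hBcard hQ₁ hQ₂ hne r x)

lemma mem_prevR {x : B × GTask B} {z : B} :
    z ∈ prevR hBcard hQ₁ hQ₂ hne r x
      ↔ z ∈ (⊥ : Subring B) ∨ ∃ y : {y // r y x}, z ∈ chainR hBcard hQ₁ hQ₂ hne r y.1 := by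
  constructor
  · intro hz
    have := (Set.ext_iff.mp (coe_prevR hBcard hQ₁ hQ₂ hne r x) z).mp hz
    rw [Set.mem_iUnion] at this
    obtain ⟨i, hi⟩ := this
    match i with
    | none => exact Or.inl hi
    | some y => exact Or.inr ⟨y, hi⟩
  · rintro (hz | ⟨y, hz⟩)
    · exact bot_le_prevR hBcard hQ₁ hQ₂ hne r x hz
    · exact chainR_le_prevR hBcard hQ₁ hQ₂ hne r y.2 hz


lemma aleph0_le_mkB : ℵ₀ ≤ #B := by
  rw [hBcard]
  exact lam_uncountable.le

lemma card_seg_lt (hord : Cardinal.ord #(B × GTask B) = Ordinal.type r) (x : B × GTask B) :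
    #{y // r y x} < #(B ⧸ IsLocalRing.maximalIdeal B) := by
  have h1 : (Ordinal.typein r x).card < #(B × GTask B) := Cardinal.card_typein_lt (r := r) x hord
  have h2 : (Ordinal.typein r x).card = #{y // r y x} := Ordinal.card_typein x
  rw [h2] at h1
  rwa [card_iota (aleph0_le_mkB hBcard hQ₁ hQ₂ hne), hBcard] at h1

lemma card_seg'_lt (hord : Cardinal.ord #(B × GTask B) = Ordinal.type r) (x : B × GTask B) :
    #{y // r y x ∨ y = x} < #(B ⧸ IsLocalRing.maximalIdeal B) := by
  have hsub : {y | r y x ∨ y = x} ⊆ {y | r y x} ∪ {x} := by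
    rintro y (hy | rfl)
    · exact Or.inl hy
    · exact Or.inr rfl
  calc #{y // r y x ∨ y = x} ≤ #↥({y | r y x} ∪ {x}) := mk_le_mk_of_subset hsub
  _ ≤ #{y | r y x} + #({x} : Set (B × GTask B)) := mk_union_le _ _
  _ = #{y // r y x} + 1 := by rw [mk_singleton]; rfl
  _ < #(B ⧸ IsLocalRing.maximalIdeal B) := add_lt_of_lt lam_uncountable.le
      (card_seg_lt hBcard hQ₁ hQ₂ hne r hord x)
      (lt_trans one_lt_aleph0 lam_uncountable)

lemma prevR_card_aux (x : B × GTask B)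
    (hall : ∀ y : {y // r y x}, #(chainR hBcard hQ₁ hQ₂ hne r y.1)
      ≤ max ℵ₀ #{z // r z y.1 ∨ z = y.1}) :
    #(prevR hBcard hQ₁ hQ₂ hne r x) ≤ max ℵ₀ #{y // r y x} := by
  set μ := max ℵ₀ #{y // r y x} with hμ
  have hset := coe_prevR hBcard hQ₁ hQ₂ hne r x
  have hseg : ∀ y : {y // r y x}, #{z // r z y.1 ∨ z = y.1} ≤ #{y // r y x} := by
    intro y
    refine mk_le_mk_of_subset (s := {z | r z y.1 ∨ z = y.1}) (t := {z | r z x}) ?_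
    rintro z (hz | rfl)
    · exact trans_of r hz y.2
    · exact y.2
  have hbound : ∀ i : Option {y // r y x},
      #(↥((Option.elim i ⊥ (fun y => chainR hBcard hQ₁ hQ₂ hne r y.1) : Subring B) : Set B))
        ≤ μ := by
    rintro (_ | y)
    · calc #(↥(((⊥ : Subring B) : Subring B) : Set B)) ≤ ℵ₀ := card_bot_le
      _ ≤ μ := le_max_left _ _
    · calc #(↥((chainR hBcard hQ₁ hQ₂ hne r y.1 : Subring B) : Set B))
          ≤ max ℵ₀ #{z // r z y.1 ∨ z = y.1} := hall y
      _ ≤ μ := max_le_max le_rfl (hseg y)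
  have h1 : #(prevR hBcard hQ₁ hQ₂ hne r x) = #(↥(⋃ i : Option {y // r y x},
      ((Option.elim i ⊥ (fun y => chainR hBcard hQ₁ hQ₂ hne r y.1) : Subring B) : Set B))) := by
    rw [show ((⋃ i : Option {y // r y x},
        ((Option.elim i ⊥ (fun y => chainR hBcard hQ₁ hQ₂ hne r y.1) : Subring B) : Set B)))
      = ((prevR hBcard hQ₁ hQ₂ hne r x : Subring B) : Set B) from hset.symm]
    rfl
  have h2 : #(Option {y // r y x}) ≤ μ := by
    rw [mk_option]
    refine add_le_of_le (le_max_left _ _) (le_max_right _ _) ?_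
    exact le_trans one_le_aleph0 (le_max_left _ _)
  calc #(prevR hBcard hQ₁ hQ₂ hne r x)
      ≤ #(Option {y // r y x}) * ⨆ i : Option {y // r y x},
        #(↥((Option.elim i ⊥ (fun y => chainR hBcard hQ₁ hQ₂ hne r y.1) : Subring B) : Set B)) := by
        rw [h1]; exact mk_iUnion_le _
  _ ≤ μ * μ := mul_le_mul' h2 (ciSup_le' hbound)
  _ = μ := mul_eq_self (le_max_left _ _)

lemma chainR_card (x : B × GTask B) :
    #(chainR hBcard hQ₁ hQ₂ hne r x) ≤ max ℵ₀ #{y // r y x ∨ y = x} := by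
  induction x using (IsWellFounded.wf (r := r)).induction with
  | _ x IH =>
    have hprev : #(prevR hBcard hQ₁ hQ₂ hne r x) ≤ max ℵ₀ #{y // r y x} :=
      prevR_card_aux hBcard hQ₁ hQ₂ hne r x (fun y => IH y.1 y.2)
    have hemb : #{y // r y x} ≤ #{y // r y x ∨ y = x} :=
      mk_le_mk_of_subset (s := {y | r y x}) (t := {y | r y x ∨ y = x}) (fun y hy => Or.inl hy)
    calc #(chainR hBcard hQ₁ hQ₂ hne r x)
        = #(stepR hBcard hQ₁ hQ₂ hne (prevR hBcard hQ₁ hQ₂ hne r x) x.2) := by rw [chainR_eq]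
    _ ≤ max ℵ₀ #(prevR hBcard hQ₁ hQ₂ hne r x) := stepR_card hBcard hQ₁ hQ₂ hne _ _
    _ ≤ max ℵ₀ (max ℵ₀ #{y // r y x}) := max_le_max le_rfl hprev
    _ = max ℵ₀ #{y // r y x} := by rw [← max_assoc, max_self]
    _ ≤ max ℵ₀ #{y // r y x ∨ y = x} := max_le_max le_rfl hemb

lemma prevR_small (hord : Cardinal.ord #(B × GTask B) = Ordinal.type r) (x : B × GTask B) :
    #(prevR hBcard hQ₁ hQ₂ hne r x) < #(B ⧸ IsLocalRing.maximalIdeal B) :=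
  (prevR_card_aux hBcard hQ₁ hQ₂ hne r x
    (fun y => chainR_card hBcard hQ₁ hQ₂ hne r y.1)).trans_lt
    (max_lt lam_uncountable (card_seg_lt hBcard hQ₁ hQ₂ hne r hord x))

lemma glued_chainR (hord : Cardinal.ord #(B × GTask B) = Ordinal.type r) (x : B × GTask B) :
    glued Q₁ Q₂ (chainR hBcard hQ₁ hQ₂ hne r x) := by
  induction x using (IsWellFounded.wf (r := r)).induction with
  | _ x IH =>
    have hprev : glued Q₁ Q₂ (prevR hBcard hQ₁ hQ₂ hne r x) := by
      intro z hz
      rcases (mem_prevR hBcard hQ₁ hQ₂ hne r).mp hz with hz | ⟨y, hz⟩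
      · exact glued_bot hQ₁ hQ₂ z hz
      · exact IH y.1 y.2 z hz
    rw [chainR_eq]
    exact (stepR_spec hBcard hQ₁ hQ₂ hne _ x.2
      ⟨hprev, prevR_small hBcard hQ₁ hQ₂ hne r hord x⟩).1.2.1

lemma glued_prevR (hord : Cardinal.ord #(B × GTask B) = Ordinal.type r) (x : B × GTask B) :
    glued Q₁ Q₂ (prevR hBcard hQ₁ hQ₂ hne r x) := by
  intro z hz
  rcases (mem_prevR hBcard hQ₁ hQ₂ hne r).mp hz with hz | ⟨y, hz⟩
  · exact glued_bot hQ₁ hQ₂ z hz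
  · exact glued_chainR hBcard hQ₁ hQ₂ hne r hord y.1 z hz

lemma taskSpec_at (hord : Cardinal.ord #(B × GTask B) = Ordinal.type r) (x : B × GTask B) :
    taskSpec Q₁ Q₂ x.2 (prevR hBcard hQ₁ hQ₂ hne r x) (chainR hBcard hQ₁ hQ₂ hne r x) := by
  conv_rhs => rw [chainR_eq]
  exact (stepR_spec hBcard hQ₁ hQ₂ hne _ x.2
    ⟨glued_prevR hBcard hQ₁ hQ₂ hne r hord x, prevR_small hBcard hQ₁ hQ₂ hne r hord x⟩).2


/-- the final subring -/
noncomputable def SR : Subring B :=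
  ⨆ i : Option (B × GTask B), Option.elim i ⊥ (fun x => chainR hBcard hQ₁ hQ₂ hne r x)

lemma chainR_le_SR (x : B × GTask B) :
    chainR hBcard hQ₁ hQ₂ hne r x ≤ SR hBcard hQ₁ hQ₂ hne r :=
  le_iSup (fun i : Option (B × GTask B) =>
    Option.elim i ⊥ (fun x => chainR hBcard hQ₁ hQ₂ hne r x)) (some x)

lemma SR_directed :
    Directed (· ≤ ·) (fun i : Option (B × GTask B) =>
      Option.elim i ⊥ (fun x => chainR hBcard hQ₁ hQ₂ hne r x)) := by
  intro i j
  match i, j with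
  | none, j => exact ⟨j, bot_le, le_rfl⟩
  | i, none => exact ⟨i, le_rfl, bot_le⟩
  | some y, some z =>
    rcases trichotomous_of r y z with h | h | h
    · exact ⟨some z, chainR_mono hBcard hQ₁ hQ₂ hne r h, le_rfl⟩
    · refine ⟨some z, ?_, le_rfl⟩
      simp only [Option.elim]
      rw [h]
    · exact ⟨some y, le_rfl, chainR_mono hBcard hQ₁ hQ₂ hne r h⟩

lemma mem_SR [Inhabited B] {z : B} :
    z ∈ SR hBcard hQ₁ hQ₂ hne r ↔ ∃ x, z ∈ chainR hBcard hQ₁ hQ₂ hne r x := by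
  constructor
  · intro hz
    have hset := Subring.coe_iSup_of_directed (SR_directed hBcard hQ₁ hQ₂ hne r)
    have := (Set.ext_iff.mp hset z).mp hz
    rw [Set.mem_iUnion] at this
    obtain ⟨i, hi⟩ := this
    match i with
    | none =>
      have hb : (⊥ : Subring B) ≤ chainR hBcard hQ₁ hQ₂ hne r (default, Sum.inl default) :=
        bot_le
      exact ⟨(default, Sum.inl default), hb hi⟩
    | some x => exact ⟨x, hi⟩
  · rintro ⟨x, hz⟩
    exact chainR_le_SR hBcard hQ₁ hQ₂ hne r x hz

lemma glued_SR [Inhabited B] (hord : Cardinal.ord #(B × GTask B) = Ordinal.type r) :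
    glued Q₁ Q₂ (SR hBcard hQ₁ hQ₂ hne r) := by
  intro z hz
  obtain ⟨x, hz⟩ := (mem_SR hBcard hQ₁ hQ₂ hne r).mp hz
  exact glued_chainR hBcard hQ₁ hQ₂ hne r hord x z hz

lemma exists_stage (hord : Cardinal.ord #(B × GTask B) = Ordinal.type r)
    (τ : GTask B) (x₀ : B × GTask B) : ∃ x₁, r x₀ x₁ ∧ x₁.2 = τ := by
  by_contra h
  push_neg at h
  have hf : Function.Injective (fun b : B => (⟨(b, τ), by
      rcases trichotomous_of r (b, τ) x₀ with h1 | h1 | h1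
      · exact Or.inl h1
      · exact Or.inr h1
      · exact absurd rfl (h _ h1)⟩ : {y // r y x₀ ∨ y = x₀})) := by
    intro b c hbc
    have := congrArg (fun z : {y // r y x₀ ∨ y = x₀} => z.1.1) hbc
    exact this
  have h1 : #B ≤ #{y // r y x₀ ∨ y = x₀} := mk_le_of_injective hf
  have h2 := h1.trans_lt (card_seg'_lt hBcard hQ₁ hQ₂ hne r hord x₀)
  rw [hBcard] at h2
  exact lt_irrefl _ h2

lemma exists_ub [Inhabited B] (xs : Finset (B × GTask B)) :
    ∃ ub, ∀ z ∈ xs, z = ub ∨ r z ub := by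
  classical
  induction xs using Finset.induction with
  | empty => exact ⟨(default, Sum.inl default), fun z hz => absurd hz (Finset.notMem_empty z)⟩
  | @insert a s ha ih =>
    obtain ⟨ub, hub⟩ := ih
    rcases trichotomous_of r a ub with h1 | h1 | h1
    · refine ⟨ub, fun z hz => ?_⟩
      rcases Finset.mem_insert.mp hz with rfl | hz
      · exact Or.inr h1
      · exact hub z hz
    · exact ⟨ub, fun z hz => by
        rcases Finset.mem_insert.mp hz with rfl | hz
        · exact Or.inl h1
        · exact hub z hz⟩
    · refine ⟨a, fun z hz => ?_⟩
      rcases Finset.mem_insert.mp hz with rfl | hz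
      · exact Or.inl rfl
      · rcases hub z hz with rfl | hz'
        · exact Or.inr h1
        · exact Or.inr (trans_of r hz' h1)

lemma le_prevR_of_ub {x ub : B × GTask B} (h : x = ub ∨ r x ub) {x₁ : B × GTask B}
    (h₁ : r ub x₁) : chainR hBcard hQ₁ hQ₂ hne r x ≤ prevR hBcard hQ₁ hQ₂ hne r x₁ := by
  rcases h with rfl | h
  · exact chainR_le_prevR hBcard hQ₁ hQ₂ hne r h₁
  · exact (chainR_mono hBcard hQ₁ hQ₂ hne r h).trans
      (chainR_le_prevR hBcard hQ₁ hQ₂ hne r h₁)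

end Glue2


/-- Theorem (gluing two minimal primes): there is a quasi-local subring `S` of `B` with
maximal ideal `S ∩ M`, surjecting onto `B/M²`, with good contraction of finitely
generated ideals, gluing `Q₁` and `Q₂`, and containing generating sets for all ideals
of `B` not contained in `Q₁` or `Q₂`. -/
theorem stmt_17 (B : Type*) [CommRing B] [IsNoetherianRing B] [IsLocalRing B] [IsReduced B]
    [Algebra ℚ B]
    [Uncountable (B ⧸ IsLocalRing.maximalIdeal B)]
    (hBcard : Cardinal.mk B = Cardinal.mk (B ⧸ IsLocalRing.maximalIdeal B))
    (Q₁ Q₂ : Ideal B) (hQ₁ : Q₁ ∈ minimalPrimes B) (hQ₂ : Q₂ ∈ minimalPrimes B)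
    (hne : Q₁ ≠ Q₂) :
    ∃ S : Subring B,
      IsLocalRing ↥S ∧
      (∀ x : ↥S, ¬ IsUnit x ↔ (x : B) ∈ IsLocalRing.maximalIdeal B) ∧
      Function.Surjective
        ((Ideal.Quotient.mk ((IsLocalRing.maximalIdeal B) ^ 2)).comp S.subtype) ∧
      (∀ I : Ideal ↥S, I.FG → (I.map S.subtype).comap S.subtype = I) ∧
      Q₁.comap S.subtype = Q₂.comap S.subtype ∧
      (∀ J : Ideal B, ¬ J ≤ Q₁ → ¬ J ≤ Q₂ → Ideal.span ((S : Set B) ∩ (J : Set B)) = J) := by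
  classical
  haveI : Inhabited B := ⟨0⟩
  obtain ⟨r, wo, hord⟩ := Cardinal.ord_eq (B × GTask B)
  haveI := wo
  set S : Subring B := SR hBcard hQ₁ hQ₂ hne r with hS
  have hmemS : ∀ {z : B}, z ∈ S ↔ ∃ x, z ∈ chainR hBcard hQ₁ hQ₂ hne r x :=
    fun {z} => mem_SR hBcard hQ₁ hQ₂ hne r
  have hgluedS : glued Q₁ Q₂ S := glued_SR hBcard hQ₁ hQ₂ hne r hord
  -- units of S
  have hunitS : ∀ x : ↥S, (x : B) ∉ IsLocalRing.maximalIdeal B → IsUnit x := by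
    rintro ⟨z, hz⟩ hzM
    obtain ⟨x₀, hx₀⟩ := hmemS.mp hz
    obtain ⟨x₁, hr₁, hτ₁⟩ := exists_stage hBcard hQ₁ hQ₂ hne r hord
      (Sum.inr (Sum.inr (Sum.inl z))) x₀
    have hspec := taskSpec_at hBcard hQ₁ hQ₂ hne r hord x₁
    rw [hτ₁] at hspec
    have hzprev : z ∈ prevR hBcard hQ₁ hQ₂ hne r x₁ :=
      chainR_le_prevR hBcard hQ₁ hQ₂ hne r hr₁ hx₀
    obtain ⟨v, hvR, hv⟩ := hspec hzprev hzM
    have hvS : v ∈ S := chainR_le_SR hBcard hQ₁ hQ₂ hne r x₁ hvR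
    refine IsUnit.of_mul_eq_one (⟨v, hvS⟩ : ↥S) ?_
    exact Subtype.ext hv
  have hMnotunit : ∀ x : ↥S, (x : B) ∈ IsLocalRing.maximalIdeal B → ¬ IsUnit x := by
    rintro ⟨z, hz⟩ hzM hu
    obtain ⟨w, hw⟩ := isUnit_iff_exists_inv.mp hu
    have : IsUnit z := IsUnit.of_mul_eq_one (w : B) (by simpa using congrArg Subtype.val hw)
    exact (IsLocalRing.mem_maximalIdeal z).mp hzM this
  refine ⟨S, ?_, ?_, ?_, ?_, ?_, ?_⟩
  · -- local ring
    haveI : Nontrivial ↥S := ⟨0, 1, fun h => zero_ne_one (α := B)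
      (by simpa using congrArg Subtype.val h)⟩
    refine IsLocalRing.of_isUnit_or_isUnit_one_sub_self ?_
    intro a
    by_cases ha : (a : B) ∈ IsLocalRing.maximalIdeal B
    · right
      refine hunitS (1 - a) ?_
      intro hmem
      have h1 : (1 : B) ∈ IsLocalRing.maximalIdeal B := by
        have : (1 : B) = ((1 - a : ↥S) : B) + (a : B) := by push_cast; ring
        rw [this]
        exact Ideal.add_mem _ hmem ha
      exact (IsLocalRing.maximalIdeal.isMaximal B).ne_top (Ideal.eq_top_of_isUnit_mem _ h1
        isUnit_one)
    · exact Or.inl (hunitS a ha)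
  · -- maximal ideal characterization
    intro x
    constructor
    · intro h
      by_contra hM
      exact h (hunitS x hM)
    · exact hMnotunit x
  · -- surjectivity onto B/M²
    intro y
    obtain ⟨b, rfl⟩ := Ideal.Quotient.mk_surjective y
    obtain ⟨x₁, hr₁, hτ₁⟩ := exists_stage hBcard hQ₁ hQ₂ hne r hord
      (Sum.inl b) (default, Sum.inl default)
    have hspec := taskSpec_at hBcard hQ₁ hQ₂ hne r hord x₁
    rw [hτ₁] at hspec
    obtain ⟨s, hsR, hs⟩ := hspec
    have hsS : s ∈ S := chainR_le_SR hBcard hQ₁ hQ₂ hne r x₁ hsR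
    refine ⟨⟨s, hsS⟩, ?_⟩
    simp only [RingHom.comp_apply, Subring.coe_subtype]
    exact Ideal.Quotient.mk_eq_mk_iff_sub_mem s b |>.mpr hs
  · -- contraction of finitely generated ideals
    intro I hFG
    refine le_antisymm ?_ Ideal.le_comap_map
    intro x hx
    obtain ⟨n, g, hg⟩ := Submodule.fg_iff_exists_fin_generating_family.mp hFG
    set a : Fin n → B := fun i => (g i : B) with ha
    have hg' : Ideal.span (Set.range g) = I := hg
    have hmapI : I.map S.subtype = Ideal.span (Set.range a) := by
      rw [← hg', Ideal.map_span]
      congr 1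
      rw [← Set.range_comp]
      rfl
    have hx' : (x : B) ∈ Ideal.span (Set.range a) := by
      rw [← hmapI]
      exact hx
    -- find a common stage
    have hstages : ∀ i : Fin n, ∃ x₀, a i ∈ chainR hBcard hQ₁ hQ₂ hne r x₀ :=
      fun i => hmemS.mp (g i).2
    choose st hst using hstages
    obtain ⟨stx, hstx⟩ := hmemS.mp x.2
    obtain ⟨ub, hub⟩ := exists_ub hBcard hQ₁ hQ₂ hne r
      (insert stx (Finset.image st Finset.univ))
    obtain ⟨x₁, hr₁, hτ₁⟩ := exists_stage hBcard hQ₁ hQ₂ hne r hord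
      (Sum.inr (Sum.inr (Sum.inr ((x : B), ⟨ULift.up n, a⟩)))) ub
    have hspec := taskSpec_at hBcard hQ₁ hQ₂ hne r hord x₁
    rw [hτ₁] at hspec
    have hxprev : (x : B) ∈ prevR hBcard hQ₁ hQ₂ hne r x₁ :=
      le_prevR_of_ub hBcard hQ₁ hQ₂ hne r
        (hub stx (Finset.mem_insert_self _ _)) hr₁ hstx
    have haprev : ∀ i, a i ∈ prevR hBcard hQ₁ hQ₂ hne r x₁ := by
      intro i
      refine le_prevR_of_ub hBcard hQ₁ hQ₂ hne r
        (hub (st i) (Finset.mem_insert_of_mem (Finset.mem_image_of_mem st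
          (Finset.mem_univ i)))) hr₁ (hst i)
    obtain ⟨bb, hbbR, hbbsum⟩ := hspec hxprev haprev hx'
    have hbbS : ∀ i, bb i ∈ S := fun i => chainR_le_SR hBcard hQ₁ hQ₂ hne r x₁ (hbbR i)
    have hxeq : x = ∑ i, (⟨bb i, hbbS i⟩ : ↥S) * g i := by
      apply Subtype.ext
      push_cast
      exact hbbsum.symm
    rw [hxeq]
    refine Ideal.sum_mem _ (fun i _ => ?_)
    refine Ideal.mul_mem_left _ _ ?_
    rw [← hg]
    exact Ideal.subset_span ⟨i, rfl⟩
  · -- gluing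
    ext x
    simp only [Ideal.mem_comap, Subring.coe_subtype]
    exact hgluedS (x : B) x.2
  · -- generation of ideals not inside the primes
    intro J hJ1 hJ2
    obtain ⟨n, g, hg⟩ := Submodule.fg_iff_exists_fin_generating_family.mp
      (IsNoetherian.noetherian J)
    obtain ⟨x₁, hr₁, hτ₁⟩ := exists_stage hBcard hQ₁ hQ₂ hne r hord
      (Sum.inr (Sum.inl ⟨ULift.up n, g⟩)) (default, Sum.inl default)
    have hspec := taskSpec_at hBcard hQ₁ hQ₂ hne r hord x₁
    rw [hτ₁] at hspec
    have hspan : Ideal.span (Set.range g) = J := hg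
    have hgen : Ideal.span ((chainR hBcard hQ₁ hQ₂ hne r x₁ : Set B)
        ∩ (Ideal.span (Set.range g) : Set B)) = Ideal.span (Set.range g) :=
      hspec (by rw [hspan]; exact hJ1) (by rw [hspan]; exact hJ2)
    rw [hspan] at hgen
    refine le_antisymm ?_ ?_
    · rw [Ideal.span_le]
      exact fun z hz => hz.2
    · calc J = Ideal.span ((chainR hBcard hQ₁ hQ₂ hne r x₁ : Set B) ∩ (J : Set B)) := hgen.symm
      _ ≤ Ideal.span ((S : Set B) ∩ (J : Set B)) := Ideal.span_mono
        (Set.inter_subset_inter_left _ (fun z hz => chainR_le_SR hBcard hQ₁ hQ₂ hne r x₁ hz))
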